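/- Fix d with 1 ≤ d < √3, set y = (1/2)·√(4 + 2d² − 2√3·d·√(4 − d²)), and define F(x) = π·x² + 3·arccos((1 + 2(1−x)·y − y²)/(2(1−x))) − 3·x²·arccos((1 − (1−x)² − (1−x−y)²)/(2(1−x)(1−x−y))) − (3/2)·√((3 − 2x − y)(1 − 2x − y)(1 − y²)). Then F is monotone increasing on the interval [1 − d/√3, (1−y)/2], and F(1 − d/√3) = 3·arccos(d/2) + (√3/4)·d² − (3/4)·d·√(4 − d²) − π/2. -/

import Mathlib

open Metric Real MeasureTheory
open scoped InnerProductSpace Pointwise ENNReal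

noncomputable section

/-- The Euclidean plane. -/
abbrev E2 := EuclideanSpace ℝ (Fin 2)

/-- The point of the Euclidean plane with the given coordinates. -/
def pt (a b : ℝ) : E2 := (EuclideanSpace.equiv (Fin 2) ℝ).symm ![a, b]

/-- The width of a set `C` in the direction of the unit vector `u`. -/
def dirWidth (C : Set E2) (u : E2) : ℝ :=
  sSup {w : ℝ | ∃ x ∈ C, ∃ y ∈ C, w = ⟪x - y, u⟫_ℝ}

/-- The minimal width of a set: the infimum of the directional widths over all
unit vectors. -/
def minWidth (C : Set E2) : ℝ :=
  sInf {w : ℝ | ∃ u : E2, ‖u‖ = 1 ∧ w = dirWidth C u}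

/-- The inradius of a set. -/
def inradius (C : Set E2) : ℝ :=
  sSup {r : ℝ | 0 ≤ r ∧ ∃ c : E2, closedBall c r ⊆ C}

/-- The circumradius of a set. -/
def circumradius (C : Set E2) : ℝ :=
  sInf {r : ℝ | 0 ≤ r ∧ ∃ c : E2, C ⊆ closedBall c r}

/-- The dual disk-polygon of a set `D`. -/
def dualDP (D : Set E2) : Set E2 := {y : E2 | ∀ x ∈ D, dist x y ≤ 1}

set_option maxHeartbeats 1000000 in
private lemma hasDerivAt_quad' (c0 c1 c2 x : ℝ) :
    HasDerivAt (fun z : ℝ => c0 + c1 * z + c2 * z ^ 2) (c1 + c2 * (2 * x)) x := by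
  have h1 : HasDerivAt (fun z : ℝ => c1 * z) c1 x := by
    simpa using (hasDerivAt_id x).const_mul c1
  have h2 : HasDerivAt (fun z : ℝ => c2 * z ^ 2) (c2 * (2 * x)) x := by
    have := (hasDerivAt_pow 2 x).const_mul c2
    simpa [pow_one] using this
  simpa [add_assoc] using (h1.add h2).const_add c0

private lemma hasDerivAt_of_quad (f : ℝ → ℝ) (c0 c1 c2 x e : ℝ)
    (hf : ∀ z, f z = c0 + c1 * z + c2 * z ^ 2) (he : e = c1 + c2 * (2 * x)) :
    HasDerivAt f e x := by
  have h := hasDerivAt_quad' c0 c1 c2 x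
  rw [show f = fun z => c0 + c1 * z + c2 * z ^ 2 from funext hf, he]
  exact h

private lemma arccos_antitone' {p q : ℝ} (hpq : p ≤ q) :
    Real.arccos q ≤ Real.arccos p := by
  rw [Real.arccos_eq_pi_div_two_sub_arcsin, Real.arccos_eq_pi_div_two_sub_arcsin]
  have := Real.monotone_arcsin hpq
  linarith

set_option maxHeartbeats 4000000 in
/-- The function `F(d, x)` from Case II of the proof of Theorem 1 is increasing in
`x` over `[r(Δ(d)), w(Δ(d))/2]`, and `F(d, r(Δ(d))) = a(Δ(d))`. -/
theorem F_monotone (d : ℝ) (hd1 : 1 ≤ d) (hd2 : d < Real.sqrt 3) (y : ℝ)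
    (hy : y = 1 / 2 * Real.sqrt (4 + 2 * d ^ 2
      - 2 * Real.sqrt 3 * d * Real.sqrt (4 - d ^ 2)))
    (F : ℝ → ℝ)
    (hF : ∀ x : ℝ, F x = π * x ^ 2
      + 3 * Real.arccos ((1 + 2 * (1 - x) * y - y ^ 2) / (2 * (1 - x)))
      - 3 * x ^ 2 * Real.arccos ((1 - (1 - x) ^ 2 - (1 - x - y) ^ 2)
          / (2 * (1 - x) * (1 - x - y)))
      - 3 / 2 * Real.sqrt ((3 - 2 * x - y) * (1 - 2 * x - y) * (1 - y ^ 2))) :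
    MonotoneOn F (Set.Icc (1 - d / Real.sqrt 3) ((1 - y) / 2)) ∧
    F (1 - d / Real.sqrt 3) = 3 * Real.arccos (d / 2) + Real.sqrt 3 / 4 * d ^ 2
      - 3 / 4 * d * Real.sqrt (4 - d ^ 2) - π / 2 := by
  have h3 : (Real.sqrt 3) ^ 2 = 3 := Real.sq_sqrt (by norm_num)
  set t := Real.sqrt 3 with htdef
  have ht0 : 0 < t := Real.sqrt_pos.mpr (by norm_num)
  have hd0 : 0 < d := lt_of_lt_of_le one_pos hd1
  have hd3 : d ^ 2 < 3 := by nlinarith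
  have hd4 : d ^ 2 < 4 := by nlinarith
  set s := Real.sqrt (4 - d ^ 2) with hsdef
  have hs0 : 0 ≤ s := Real.sqrt_nonneg _
  have hs : s ^ 2 = 4 - d ^ 2 := Real.sq_sqrt (by nlinarith)
  have hts : d < t * s := by nlinarith [mul_nonneg ht0.le hs0]
  have htd : 0 ≤ t * d - s := by nlinarith [mul_nonneg ht0.le hd0.le]
  have hy' : y = (t * d - s) / 2 := by
    rw [hy, show 4 + 2 * d ^ 2 - 2 * t * d * s = (t * d - s) ^ 2 by
      linear_combination (-(d^2)) * h3 - hs, Real.sqrt_sq htd]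
    ring
  have h1y : 1 - y ^ 2 = d * (t * s - d) / 2 := by
    rw [hy']; linear_combination (-(d^2)/4) * h3 - (1/4) * hs
  have hy0 : 0 ≤ y := by rw [hy']; linarith
  have h1y2 : 0 < 1 - y ^ 2 := by rw [h1y]; nlinarith
  have hy1 : y < 1 := by nlinarith
  have hdt : d < t := by nlinarith
  have ha0 : 0 < 1 - d / t := by
    rw [sub_pos, div_lt_one ht0]; exact hdt
  have h1a : 1 - (1 - d / t) = d / t := by ring
  have hv0 : d / t - y = (t * s - d) / (2 * t) := by
    rw [hy']; field_simp; linear_combination (-d) * h3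
  have hab : 1 - d / t < (1 - y) / 2 := by
    have hst : 2 * t - d < s * t := by nlinarith
    have key : (1 - y) / 2 - (1 - d / t) = (s * t - (2 * t - d)) / (4 * t) := by
      rw [hy']; field_simp; linear_combination (-4*d) * h3
    have : 0 < (s * t - (2 * t - d)) / (4 * t) := div_pos (by linarith) (by linarith)
    linarith
  -- key identity: at the left endpoint, u₀² + u₀v₀ + v₀² = 1
  have key0 : (d / t) ^ 2 + (d / t) * (d / t - y) + (d / t - y) ^ 2 = 1 := by
    rw [hy']; field_simp
    linear_combination (-3*d^2 + t^2*d^2 - 2*t*s*d + s^2 - 4) * h3 + 3 * hs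
  -- ===== value at the left endpoint =====
  have hdd : d / 2 ≤ 1 := by nlinarith
  have hdd' : (-1:ℝ) ≤ d / 2 := by linarith
  have harg1 : (1 + 2 * (1 - (1 - d / t)) * y - y ^ 2) / (2 * (1 - (1 - d / t)))
      = (t * d + s) / 4 := by
    rw [h1a, hy']; field_simp
    linear_combination (-4*t*d^2 + 8*s*d) * h3 - 4*t * hs
  have hpi6 : Real.arccos (t / 2) = π / 6 := by
    rw [show t / 2 = Real.cos (π / 6) by rw [Real.cos_pi_div_six, htdef]]
    exact Real.arccos_cos (by positivity) (by linarith [Real.pi_pos])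
  have hA : Real.arccos ((t * d + s) / 4) = Real.arccos (d / 2) - π / 6 := by
    have h0 : 0 ≤ Real.arccos (d / 2) - π / 6 := by
      have := arccos_antitone' (show d / 2 ≤ t / 2 by linarith)
      rw [hpi6] at this; linarith
    have hπ : Real.arccos (d / 2) - π / 6 ≤ π := by
      have := Real.arccos_le_pi (d / 2); linarith [Real.pi_pos]
    have hcos : Real.cos (Real.arccos (d / 2) - π / 6) = (t * d + s) / 4 := by
      rw [Real.cos_sub, Real.cos_arccos hdd' hdd, Real.sin_arccos,
        Real.cos_pi_div_six, Real.sin_pi_div_six,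
        show 1 - (d / 2) ^ 2 = (s / 2) ^ 2 by linear_combination (-1/4) * hs,
        Real.sqrt_sq (by positivity), ← htdef]
      ring
    rw [← hcos, Real.arccos_cos h0 hπ]
  have harg2 : (1 - (1 - (1 - d / t)) ^ 2 - (1 - (1 - d / t) - y) ^ 2)
      / (2 * (1 - (1 - d / t)) * (1 - (1 - d / t) - y)) = 1 / 2 := by
    rw [h1a, hv0]
    have hne : t * s - d ≠ 0 := ne_of_gt (by linarith)
    field_simp
    linear_combination (4 - s^2) * h3 - 3 * hs
  have hhalf : Real.arccos (1 / 2) = π / 3 := by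
    rw [show (1:ℝ) / 2 = Real.cos (π / 3) from Real.cos_pi_div_three.symm]
    exact Real.arccos_cos (by positivity) (by linarith [Real.pi_pos])
  have h3std : 0 ≤ d * (3 * s - t * d) / 6 := by nlinarith
  have harg3 : (3 - 2 * (1 - d / t) - y) * (1 - 2 * (1 - d / t) - y) * (1 - y ^ 2)
      = (d * (3 * s - t * d) / 6) ^ 2 := by
    rw [hy']; field_simp
    linear_combination ((-576) + (-288)*d^2 + (-84)*d^4 + (288)*s^2 + (72)*s^2*d^2
      + (-36)*s^4 + (-576)*t*s*d + (-336)*t*s*d^3 + (144)*t*s^3*d + (288)*t^2*d^2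
      + (164)*t^2*d^4 + (-216)*t^2*s^2*d^2 + (144)*t^3*s*d^3 + (-36)*t^4*d^4) * h3
      + ((432) + (-252)*d^2 + (-108)*s^2 + (144)*t*s*d) * hs
  have hval : F (1 - d / t) = 3 * Real.arccos (d / 2) + t / 4 * d ^ 2
      - 3 / 4 * d * s - π / 2 := by
    rw [hF, harg1, hA, harg2, hhalf, harg3, Real.sqrt_sq h3std]
    ring
  -- ===== monotonicity =====
  have key : ∀ x ∈ Set.Ioo (1 - d / t) ((1 - y) / 2),
      ∃ e : ℝ, HasDerivAt F e x ∧ 0 ≤ e := by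
    intro x hx
    obtain ⟨hxa, hxb⟩ := hx
    have hx2 : 2 * x < 1 - y := by linarith
    have hu : 0 < 1 - x := by linarith
    have hv : 0 < 1 - x - y := by linarith
    have huv : 1 < (1 - x) + (1 - x - y) := by linarith
    have hxpos : 0 < x := lt_trans ha0 hxa
    have hQpos : 0 < (3 - 2 * x - y) * (1 - 2 * x - y) * (1 - y ^ 2) :=
      mul_pos (mul_pos (by linarith) (by linarith)) h1y2
    set S := Real.sqrt ((3 - 2 * x - y) * (1 - 2 * x - y) * (1 - y ^ 2)) with hSdef
    have hSpos : 0 < S := Real.sqrt_pos.mpr hQpos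
    have hS2 : S ^ 2 = (3 - 2 * x - y) * (1 - 2 * x - y) * (1 - y ^ 2) :=
      Real.sq_sqrt hQpos.le
    have hNgpos : 0 < 1 + 2 * (1 - x) * y - y ^ 2 := by
      linarith [mul_nonneg hu.le hy0, h1y2]
    have hglt : (1 + 2 * (1 - x) * y - y ^ 2) / (2 * (1 - x)) < 1 := by
      rw [div_lt_one (by linarith)]
      linarith [mul_pos (show (0:ℝ) < 1 - y by linarith)
        (show (0:ℝ) < 1 - 2 * x - y by linarith)]
    have hggt : (-1:ℝ) < (1 + 2 * (1 - x) * y - y ^ 2) / (2 * (1 - x)) := by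
      have := div_pos hNgpos (show (0:ℝ) < 2 * (1 - x) by linarith)
      linarith
    have hDk0 : 0 < 2 * (1 - x) * (1 - x - y) := by positivity
    have hklt : (1 - (1 - x) ^ 2 - (1 - x - y) ^ 2)
        / (2 * (1 - x) * (1 - x - y)) < 1 := by
      rw [div_lt_one hDk0]
      linarith [sq_nonneg ((1 - x) + (1 - x - y) - 1), huv]
    have hkhalf : 1 / 2 ≤ (1 - (1 - x) ^ 2 - (1 - x - y) ^ 2)
        / (2 * (1 - x) * (1 - x - y)) := by
      rw [le_div_iff₀ hDk0]
      linarith [key0, mul_nonneg (sub_nonneg.mpr hxa.le)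
        (show (0:ℝ) ≤ d / t + (1 - x - y) by positivity)]
    have hkgt : (-1:ℝ) < (1 - (1 - x) ^ 2 - (1 - x - y) ^ 2)
        / (2 * (1 - x) * (1 - x - y)) := by linarith
    -- sqrt identities
    have hsg : Real.sqrt (1 - ((1 + 2 * (1 - x) * y - y ^ 2) / (2 * (1 - x))) ^ 2)
        = S / (2 * (1 - x)) := by
      rw [show 1 - ((1 + 2 * (1 - x) * y - y ^ 2) / (2 * (1 - x))) ^ 2
          = (S / (2 * (1 - x))) ^ 2 by
        field_simp
        linear_combination -hS2]
      exact Real.sqrt_sq (by positivity)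
    have hsk : Real.sqrt (1 - ((1 - (1 - x) ^ 2 - (1 - x - y) ^ 2)
        / (2 * (1 - x) * (1 - x - y))) ^ 2) = S / (2 * (1 - x) * (1 - x - y)) := by
      rw [show 1 - ((1 - (1 - x) ^ 2 - (1 - x - y) ^ 2)
          / (2 * (1 - x) * (1 - x - y))) ^ 2
          = (S / (2 * (1 - x) * (1 - x - y))) ^ 2 by
        field_simp
        linear_combination -hS2]
      exact Real.sqrt_sq (by positivity)
    -- derivatives of the pieces
    have hNg : HasDerivAt (fun z : ℝ => 1 + 2 * (1 - z) * y - y ^ 2) (-(2 * y)) x :=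
      hasDerivAt_of_quad _ (1 + 2 * y - y ^ 2) (-(2 * y)) 0 x _
        (fun z => by ring) (by ring)
    have hDg : HasDerivAt (fun z : ℝ => 2 * (1 - z)) (-2) x :=
      hasDerivAt_of_quad _ 2 (-2) 0 x _ (fun z => by ring) (by ring)
    have hg : HasDerivAt (fun z : ℝ => (1 + 2 * (1 - z) * y - y ^ 2) / (2 * (1 - z)))
        ((-(2 * y) * (2 * (1 - x)) - (1 + 2 * (1 - x) * y - y ^ 2) * (-2))
          / (2 * (1 - x)) ^ 2) x :=
      hNg.div hDg (by positivity)
    have hag : HasDerivAt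
        (fun z : ℝ => Real.arccos ((1 + 2 * (1 - z) * y - y ^ 2) / (2 * (1 - z))))
        (-(1 / Real.sqrt (1 - ((1 + 2 * (1 - x) * y - y ^ 2) / (2 * (1 - x))) ^ 2))
          * ((-(2 * y) * (2 * (1 - x)) - (1 + 2 * (1 - x) * y - y ^ 2) * (-2))
            / (2 * (1 - x)) ^ 2)) x := by
      have H := (Real.hasDerivAt_arccos hggt.ne' hglt.ne).comp x hg
      exact H
    have hNk : HasDerivAt (fun z : ℝ => 1 - (1 - z) ^ 2 - (1 - z - y) ^ 2)
        ((4 - 2 * y) + (-2) * (2 * x)) x :=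
      hasDerivAt_of_quad _ (-(1 - y) ^ 2 + y ^ 2 - y ^ 2) (4 - 2 * y) (-2) x _
        (fun z => by ring) (by ring)
    have hDkd : HasDerivAt (fun z : ℝ => 2 * (1 - z) * (1 - z - y))
        ((2 * y - 4) + 2 * (2 * x)) x :=
      hasDerivAt_of_quad _ (2 * (1 - y)) (2 * y - 4) 2 x _
        (fun z => by ring) (by ring)
    have hk : HasDerivAt
        (fun z : ℝ => (1 - (1 - z) ^ 2 - (1 - z - y) ^ 2) / (2 * (1 - z) * (1 - z - y)))
        ((((4 - 2 * y) + (-2) * (2 * x)) * (2 * (1 - x) * (1 - x - y))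
          - (1 - (1 - x) ^ 2 - (1 - x - y) ^ 2) * ((2 * y - 4) + 2 * (2 * x)))
          / (2 * (1 - x) * (1 - x - y)) ^ 2) x :=
      hNk.div hDkd (ne_of_gt hDk0)
    have hak : HasDerivAt
        (fun z : ℝ => Real.arccos ((1 - (1 - z) ^ 2 - (1 - z - y) ^ 2)
          / (2 * (1 - z) * (1 - z - y))))
        (-(1 / Real.sqrt (1 - ((1 - (1 - x) ^ 2 - (1 - x - y) ^ 2)
          / (2 * (1 - x) * (1 - x - y))) ^ 2))
          * ((((4 - 2 * y) + (-2) * (2 * x)) * (2 * (1 - x) * (1 - x - y))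
            - (1 - (1 - x) ^ 2 - (1 - x - y) ^ 2) * ((2 * y - 4) + 2 * (2 * x)))
            / (2 * (1 - x) * (1 - x - y)) ^ 2)) x := by
      have H := (Real.hasDerivAt_arccos hkgt.ne' hklt.ne).comp x hk
      exact H
    have hQd : HasDerivAt (fun z : ℝ => (3 - 2 * z - y) * (1 - 2 * z - y) * (1 - y ^ 2))
        ((-8 + 4 * y) * (1 - y ^ 2) + (4 * (1 - y ^ 2)) * (2 * x)) x :=
      hasDerivAt_of_quad _ ((3 - y) * (1 - y) * (1 - y ^ 2))
        ((-8 + 4 * y) * (1 - y ^ 2)) (4 * (1 - y ^ 2)) x _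
        (fun z => by ring) (by ring)
    have hsq : HasDerivAt
        (fun z : ℝ => Real.sqrt ((3 - 2 * z - y) * (1 - 2 * z - y) * (1 - y ^ 2)))
        (((-8 + 4 * y) * (1 - y ^ 2) + (4 * (1 - y ^ 2)) * (2 * x)) / (2 * S)) x :=
      hQd.sqrt (ne_of_gt hQpos)
    have hp2 : HasDerivAt (fun z : ℝ => π * z ^ 2) (0 + π * (2 * x)) x :=
      hasDerivAt_of_quad _ 0 0 π x _ (fun z => by ring) rfl
    have h3z2 : HasDerivAt (fun z : ℝ => 3 * z ^ 2) (0 + 3 * (2 * x)) x :=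
      hasDerivAt_of_quad _ 0 0 3 x _ (fun z => by ring) rfl
    have hFd : HasDerivAt F
        ((0 + π * (2 * x)
          + 3 * (-(1 / Real.sqrt (1 - ((1 + 2 * (1 - x) * y - y ^ 2) / (2 * (1 - x))) ^ 2))
            * ((-(2 * y) * (2 * (1 - x)) - (1 + 2 * (1 - x) * y - y ^ 2) * (-2))
              / (2 * (1 - x)) ^ 2))
          - ((0 + 3 * (2 * x)) * Real.arccos ((1 - (1 - x) ^ 2 - (1 - x - y) ^ 2)
              / (2 * (1 - x) * (1 - x - y)))
            + 3 * x ^ 2 * (-(1 / Real.sqrt (1 - ((1 - (1 - x) ^ 2 - (1 - x - y) ^ 2)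
              / (2 * (1 - x) * (1 - x - y))) ^ 2))
              * ((((4 - 2 * y) + (-2) * (2 * x)) * (2 * (1 - x) * (1 - x - y))
                - (1 - (1 - x) ^ 2 - (1 - x - y) ^ 2) * ((2 * y - 4) + 2 * (2 * x)))
                / (2 * (1 - x) * (1 - x - y)) ^ 2)))
          - 3 / 2 * (((-8 + 4 * y) * (1 - y ^ 2) + (4 * (1 - y ^ 2)) * (2 * x))
            / (2 * S)))) x := by
      rw [show F = fun z : ℝ => π * z ^ 2
        + 3 * Real.arccos ((1 + 2 * (1 - z) * y - y ^ 2) / (2 * (1 - z)))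
        - 3 * z ^ 2 * Real.arccos ((1 - (1 - z) ^ 2 - (1 - z - y) ^ 2)
            / (2 * (1 - z) * (1 - z - y)))
        - 3 / 2 * Real.sqrt ((3 - 2 * z - y) * (1 - 2 * z - y) * (1 - y ^ 2))
        from funext hF]
      exact ((hp2.add (hag.const_mul 3)).sub (h3z2.mul hak)).sub (hsq.const_mul (3 / 2))
    refine ⟨_, hFd, ?_⟩
    have hD : (0 + π * (2 * x)
          + 3 * (-(1 / Real.sqrt (1 - ((1 + 2 * (1 - x) * y - y ^ 2) / (2 * (1 - x))) ^ 2))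
            * ((-(2 * y) * (2 * (1 - x)) - (1 + 2 * (1 - x) * y - y ^ 2) * (-2))
              / (2 * (1 - x)) ^ 2))
          - ((0 + 3 * (2 * x)) * Real.arccos ((1 - (1 - x) ^ 2 - (1 - x - y) ^ 2)
              / (2 * (1 - x) * (1 - x - y)))
            + 3 * x ^ 2 * (-(1 / Real.sqrt (1 - ((1 - (1 - x) ^ 2 - (1 - x - y) ^ 2)
              / (2 * (1 - x) * (1 - x - y))) ^ 2))
              * ((((4 - 2 * y) + (-2) * (2 * x)) * (2 * (1 - x) * (1 - x - y))
                - (1 - (1 - x) ^ 2 - (1 - x - y) ^ 2) * ((2 * y - 4) + 2 * (2 * x)))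
                / (2 * (1 - x) * (1 - x - y)) ^ 2)))
          - 3 / 2 * (((-8 + 4 * y) * (1 - y ^ 2) + (4 * (1 - y ^ 2)) * (2 * x))
            / (2 * S)))
        = 2 * x * (π - 3 * Real.arccos ((1 - (1 - x) ^ 2 - (1 - x - y) ^ 2)
            / (2 * (1 - x) * (1 - x - y))))
          + 3 * (1 - y ^ 2) * (1 - 2 * x - y) ^ 2 / ((1 - x - y) * S) := by
      rw [hsg, hsk]
      field_simp
      ring
    rw [hD]
    have hakle : Real.arccos ((1 - (1 - x) ^ 2 - (1 - x - y) ^ 2)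
        / (2 * (1 - x) * (1 - x - y))) ≤ π / 3 := by
      have := arccos_antitone' hkhalf
      rw [hhalf] at this; exact this
    have t1 : 0 ≤ 2 * x * (π - 3 * Real.arccos ((1 - (1 - x) ^ 2 - (1 - x - y) ^ 2)
        / (2 * (1 - x) * (1 - x - y)))) :=
      mul_nonneg (by linarith) (by linarith)
    have t2 : 0 ≤ 3 * (1 - y ^ 2) * (1 - 2 * x - y) ^ 2 / ((1 - x - y) * S) := by
      apply div_nonneg
      · exact mul_nonneg (mul_nonneg (by norm_num) h1y2.le) (sq_nonneg _)
      · positivity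
    linarith
  constructor
  · apply monotoneOn_of_deriv_nonneg (convex_Icc _ _)
    · rw [show F = fun z : ℝ => π * z ^ 2
        + 3 * Real.arccos ((1 + 2 * (1 - z) * y - y ^ 2) / (2 * (1 - z)))
        - 3 * z ^ 2 * Real.arccos ((1 - (1 - z) ^ 2 - (1 - z - y) ^ 2)
            / (2 * (1 - z) * (1 - z - y)))
        - 3 / 2 * Real.sqrt ((3 - 2 * z - y) * (1 - 2 * z - y) * (1 - y ^ 2))
        from funext hF]
      apply ContinuousOn.sub
      apply ContinuousOn.sub
      apply ContinuousOn.add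
      · exact (Continuous.mul continuous_const (continuous_pow 2)).continuousOn
      · apply ContinuousOn.mul continuousOn_const
        apply Real.continuous_arccos.comp_continuousOn
        apply ContinuousOn.div (by fun_prop) (by fun_prop)
        intro z hz
        have hz2 := hz.2
        have : 0 < 1 - z := by
          simp only [Set.mem_Icc] at hz
          linarith [hz.2]
        positivity
      · apply ContinuousOn.mul (by fun_prop)
        apply Real.continuous_arccos.comp_continuousOn
        apply ContinuousOn.div (by fun_prop) (by fun_prop)
        intro z hz
        simp only [Set.mem_Icc] at hz
        have h1 : 0 < 1 - z := by linarith [hz.2]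
        have h2 : 0 < 1 - z - y := by linarith [hz.2]
        positivity
      · apply ContinuousOn.mul continuousOn_const
        exact (Real.continuous_sqrt.comp (by fun_prop)).continuousOn
    · intro x hx
      rw [interior_Icc] at hx
      obtain ⟨e, he, _⟩ := key x hx
      exact he.differentiableAt.differentiableWithinAt
    · intro x hx
      rw [interior_Icc] at hx
      obtain ⟨e, he, h0⟩ := key x hx
      rw [he.deriv]; exact h0
  · exact hval
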